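/- Let n ≥ 2. Then the set B has cardinality |B| = a_1·a_2···a_n + Σ_{j=1}^{n} d_j·∏_{1 ≤ i ≤ n, i ≠ j} a_i. -/

import Mathlib

open Finset

/-- The set `B` of lattice points `v ∈ ℤ^n` with `-dᵢ < vᵢ ≤ aᵢ` for all `i`, and
for all `i < j`, `dⱼ(vᵢ - aᵢ) ≤ dᵢ vⱼ` and `dᵢ vⱼ < dⱼ vᵢ + dᵢ aⱼ`. -/
def setB (n : ℕ) (a d : Fin n → ℤ) : Set (Fin n → ℤ) :=
  {v | (∀ i, -d i < v i ∧ v i ≤ a i) ∧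
    ∀ i j : Fin n, i < j →
      d j * (v i - a i) ≤ d i * v j ∧ d i * v j < d j * v i + d i * a j}

section Aux

lemma memIoc1 {c e v δ : ℤ} (hδ : 0 < δ) :
    v ∈ Finset.Ioc (c / δ) (c / δ + e) ↔ c < v * δ ∧ (v - e) * δ ≤ c := by
  rw [Finset.mem_Ioc, Int.ediv_lt_iff_lt_mul hδ, ← sub_le_iff_le_add,
    Int.le_ediv_iff_mul_le hδ]

lemma memIoc2 {c e v δ : ℤ} (hδ : 0 < δ) :
    v ∈ Finset.Ioc ((c - 1) / δ) ((c - 1) / δ + e) ↔ c ≤ v * δ ∧ (v - e) * δ < c := by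
  rw [memIoc1 hδ, Int.sub_one_lt_iff, Int.le_sub_one_iff]

variable {n : ℕ} (a d : Fin n → ℤ)

def qv (j : Fin n) (w : ℤ) (i : Fin n) : ℤ :=
  if i < j then (d i * (w - a j)) / (d j) else (d i * (w - a j) - 1) / (d j)

noncomputable def Tj (j : Fin n) (w : ℤ) : Finset (Fin n → ℤ) :=
  Fintype.piFinset (fun i =>
    if i = j then {w} else Finset.Ioc (qv a d j w i) (qv a d j w i + a i))

noncomputable def Sj (j : Fin n) : Finset (Fin n → ℤ) :=
  (Finset.Ioc (a j - d j) (a j)).biUnion (Tj a d j)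

noncomputable def boxLow : Finset (Fin n → ℤ) :=
  Fintype.piFinset (fun i => Finset.Ioc (-(d i)) (a i - d i))

noncomputable def FF : Finset (Fin n → ℤ) := boxLow a d ∪ Finset.univ.biUnion (Sj a d)

/-- pivot condition -/
def Pcond (j : Fin n) (v : Fin n → ℤ) : Prop :=
  ∀ i : Fin n,
    (i < j → d i * (v j - a j) < v i * d j ∧ (v i - a i) * d j ≤ d i * (v j - a j)) ∧
    (j < i → d i * (v j - a j) ≤ v i * d j ∧ (v i - a i) * d j < d i * (v j - a j))

lemma mem_Tj_iff {j : Fin n} (hdj : 0 < d j) (w : ℤ) (v : Fin n → ℤ) :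
    v ∈ Tj a d j w ↔ v j = w ∧ ∀ i : Fin n,
      (i < j → d i * (w - a j) < v i * d j ∧ (v i - a i) * d j ≤ d i * (w - a j)) ∧
      (j < i → d i * (w - a j) ≤ v i * d j ∧ (v i - a i) * d j < d i * (w - a j)) := by
  rw [Tj, Fintype.mem_piFinset]
  constructor
  · intro h
    have hj : v j = w := by have := h j; simpa using this
    refine ⟨hj, fun i => ⟨fun hij => ?_, fun hji => ?_⟩⟩
    · have hi := h i
      rw [if_neg (ne_of_lt hij), qv, if_pos hij] at hi
      exact (memIoc1 hdj).mp hi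
    · have hi := h i
      rw [if_neg (ne_of_gt hji), qv, if_neg (not_lt.mpr hji.le)] at hi
      exact (memIoc2 hdj).mp hi
  · rintro ⟨hj, h⟩ i
    by_cases hij : i = j
    · subst hij; simpa using hj
    · rw [if_neg hij, qv]
      rcases lt_or_gt_of_ne hij with hlt | hgt
      · rw [if_pos hlt]; exact (memIoc1 hdj).mpr ((h i).1 hlt)
      · rw [if_neg (not_lt.mpr hgt.le)]; exact (memIoc2 hdj).mpr ((h i).2 hgt)

lemma mem_Sj_iff {j : Fin n} (hdj : 0 < d j) (v : Fin n → ℤ) :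
    v ∈ Sj a d j ↔ (a j - d j < v j ∧ v j ≤ a j) ∧ Pcond a d j v := by
  rw [Sj, Finset.mem_biUnion]
  constructor
  · rintro ⟨w, hw, hT⟩
    rw [mem_Tj_iff a d hdj] at hT
    obtain ⟨hvj, hcond⟩ := hT
    subst hvj
    exact ⟨Finset.mem_Ioc.mp hw, hcond⟩
  · rintro ⟨hw, hcond⟩
    exact ⟨v j, Finset.mem_Ioc.mpr hw, (mem_Tj_iff a d hdj (v j) v).mpr ⟨rfl, hcond⟩⟩

end Aux

section Eq
variable {n : ℕ} (a d : Fin n → ℤ)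

lemma boxLow_subset (ha : ∀ i, 0 < a i) (hd : ∀ i, 0 < d i)
    {v : Fin n → ℤ} (hv : v ∈ boxLow a d) : v ∈ setB n a d := by
  rw [boxLow, Fintype.mem_piFinset] at hv
  simp only [Finset.mem_Ioc] at hv
  refine ⟨fun i => ⟨(hv i).1, by linarith [(hv i).2, hd i]⟩, fun i j hij => ?_⟩
  constructor
  · have h1 : d j * (v i - a i) ≤ d j * (-(d i)) :=
      mul_le_mul_of_nonneg_left (by linarith [(hv i).2]) (hd j).le
    have h2 : d i * (-(d j)) < d i * v j :=
      mul_lt_mul_of_pos_left (hv j).1 (hd i)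
    nlinarith
  · have h1 : d i * (v j - a j) ≤ d i * (-(d j)) :=
      mul_le_mul_of_nonneg_left (by linarith [(hv j).2]) (hd i).le
    have h2 : d j * (-(d i)) < d j * v i :=
      mul_lt_mul_of_pos_left (hv i).1 (hd j)
    nlinarith

lemma Sj_subset (ha : ∀ i, 0 < a i) (hd : ∀ i, 0 < d i)
    {j : Fin n} {v : Fin n → ℤ} (hv : v ∈ Sj a d j) : v ∈ setB n a d := by
  rw [mem_Sj_iff a d (hd j)] at hv
  obtain ⟨⟨hw1, hw2⟩, hP⟩ := hv
  have hja : v j - a j ≤ 0 := by linarith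
  have hjd : -(d j) < v j - a j := by linarith
  -- ranges
  have hran : ∀ i, -d i < v i ∧ v i ≤ a i := by
    intro i
    by_cases hij : i = j
    · subst hij; exact ⟨by linarith [ha i], hw2⟩
    rcases lt_or_gt_of_ne hij with hlt | hgt
    · obtain ⟨h1, h2⟩ := (hP i).1 hlt
      constructor
      · have key : (-(d i)) * d j < v i * d j := by
          have := mul_lt_mul_of_pos_left hjd (hd i)
          nlinarith
        exact lt_of_mul_lt_mul_right key (hd j).le
      · have key : (v i - a i) * d j ≤ 0 * d j := by
          have h0 : d i * (v j - a j) ≤ 0 := mul_nonpos_of_nonneg_of_nonpos (hd i).le hja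
          linarith
        have := le_of_mul_le_mul_right key (hd j)
        linarith
    · obtain ⟨h1, h2⟩ := (hP i).2 hgt
      constructor
      · have key : (-(d i)) * d j < v i * d j := by
          have := mul_lt_mul_of_pos_left hjd (hd i)
          nlinarith
        exact lt_of_mul_lt_mul_right key (hd j).le
      · have key : (v i - a i) * d j ≤ 0 * d j := by
          have h0 : d i * (v j - a j) ≤ 0 := mul_nonpos_of_nonneg_of_nonpos (hd i).le hja
          linarith
        have := le_of_mul_le_mul_right key (hd j)
        linarith
  refine ⟨hran, fun p q hpq => ?_⟩
  by_cases hpj : p = j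
  · subst hpj
    have hq := (hP q).2 hpq
    constructor
    · linarith [hq.1]
    · have h1 := hq.2
      have h2 : d q * (v p - a p) ≤ d q * v p :=
        mul_le_mul_of_nonneg_left (by linarith [ha p]) (hd q).le
      linarith
  · by_cases hqj : q = j
    · subst hqj
      have hp := (hP p).1 hpq
      constructor
      · have h1 := hp.2
        have h2 : d p * (v q - a q) ≤ d p * v q :=
          mul_le_mul_of_nonneg_left (by linarith [ha q]) (hd p).le
        linarith
      · linarith [hp.1]
    · -- both ≠ j
      have hA : (v p - a p) * d j ≤ d p * (v j - a j) := by
        rcases lt_or_gt_of_ne hpj with h | h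
        · exact ((hP p).1 h).2
        · exact (((hP p).2 h).2).le
      have hB : d q * (v j - a j) ≤ v q * d j := by
        rcases lt_or_gt_of_ne hqj with h | h
        · exact (((hP q).1 h).1).le
        · exact ((hP q).2 h).1
      constructor
      · have key : (d q * (v p - a p)) * d j ≤ (d p * v q) * d j := by
          have h1 := mul_le_mul_of_nonneg_left hA (hd q).le
          have h2 := mul_le_mul_of_nonneg_left hB (hd p).le
          nlinarith
        have := le_of_mul_le_mul_right key (hd j)
        linarith
      · -- strict one
        have key : (d p * (v q - a q)) * d j < (d q * v p) * d j := by
          rcases lt_or_gt_of_ne hqj with h | h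
          · -- q < j hence p < j : strict from hB side
            have hA' : (v q - a q) * d j ≤ d q * (v j - a j) := ((hP q).1 h).2
            have hB' : d p * (v j - a j) < v p * d j := ((hP p).1 (hpq.trans h)).1
            have h1 := mul_le_mul_of_nonneg_left hA' (hd p).le
            have h2 := mul_lt_mul_of_pos_left hB' (hd q)
            nlinarith
          · -- j < q : strict from hA side
            have hA' : (v q - a q) * d j < d q * (v j - a j) := ((hP q).2 h).2
            have hB' : d p * (v j - a j) ≤ v p * d j := by
              rcases lt_or_gt_of_ne hpj with h' | h'
              · exact (((hP p).1 h').1).le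
              · exact ((hP p).2 h').1
            have h1 := mul_lt_mul_of_pos_left hA' (hd p)
            have h2 := mul_le_mul_of_nonneg_left hB' (hd q).le
            nlinarith
        have := lt_of_mul_lt_mul_right key (hd j).le
        linarith

end Eq
section Fwd
variable {n : ℕ} (a d : Fin n → ℤ)

lemma setB_subset (ha : ∀ i, 0 < a i) (hd : ∀ i, 0 < d i)
    {v : Fin n → ℤ} (hv : v ∈ setB n a d) : v ∈ FF a d := by
  obtain ⟨hran, hpair⟩ := hv
  rw [FF, Finset.mem_union]
  by_cases hlow : ∀ i, v i ≤ a i - d i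
  · left
    rw [boxLow, Fintype.mem_piFinset]
    intro i
    exact Finset.mem_Ioc.mpr ⟨(hran i).1, hlow i⟩
  · right
    push_neg at hlow
    obtain ⟨i₀, hi₀⟩ := hlow  -- a i₀ - d i₀ < v i₀
    classical
    set f : Fin n → ℚ := fun i => ((v i - a i : ℤ) : ℚ) / ((d i : ℤ) : ℚ) with hf
    have hfd : ∀ i, (0:ℚ) < ((d i : ℤ) : ℚ) := fun i => by exact_mod_cast hd i
    have hfle : ∀ x y, f x ≤ f y ↔ (v x - a x) * d y ≤ (v y - a y) * d x := by
      intro x y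
      rw [hf]
      dsimp only
      rw [div_le_div_iff₀ (hfd x) (hfd y)]
      exact_mod_cast Iff.rfl
    have hflt : ∀ x y, f x < f y ↔ (v x - a x) * d y < (v y - a y) * d x := by
      intro x y
      rw [hf]
      dsimp only
      rw [div_lt_div_iff₀ (hfd x) (hfd y)]
      exact_mod_cast Iff.rfl
    set A : Finset (Fin n) := Finset.univ.filter (fun i => ∀ k, f k ≤ f i) with hA
    obtain ⟨j₀, -, hj₀⟩ :=
      Finset.exists_max_image (Finset.univ : Finset (Fin n)) f ⟨i₀, Finset.mem_univ i₀⟩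
    have hAne : A.Nonempty := by
      refine ⟨j₀, ?_⟩
      rw [hA, Finset.mem_filter]
      exact ⟨Finset.mem_univ _, fun k => hj₀ k (Finset.mem_univ k)⟩
    set j := A.max' hAne with hj
    have hjA : j ∈ A := A.max'_mem hAne
    have hjmax : ∀ k, f k ≤ f j := by
      rw [hA, Finset.mem_filter] at hjA
      exact hjA.2
    have hgt : ∀ i, j < i → f i < f j := by
      intro i hji
      have hiA : i ∉ A := fun hiA' => absurd (A.le_max' i hiA') (not_le.mpr hji)
      rw [hA, Finset.mem_filter] at hiA
      push_neg at hiA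
      obtain ⟨k, hk⟩ := hiA (Finset.mem_univ i)
      exact lt_of_lt_of_le hk (hjmax k)
    rw [Finset.mem_biUnion]
    refine ⟨j, Finset.mem_univ j, (mem_Sj_iff a d (hd j) v).mpr ⟨⟨?_, (hran j).2⟩, ?_⟩⟩
    · -- a j - d j < v j
      have h1 : (v i₀ - a i₀) * d j ≤ (v j - a j) * d i₀ := (hfle i₀ j).mp (hjmax i₀)
      have h2 : (-(d i₀)) * d j < (v i₀ - a i₀) * d j :=
        mul_lt_mul_of_pos_right (by linarith) (hd j)
      have key : (-(d j)) * d i₀ < (v j - a j) * d i₀ := by nlinarith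
      have := lt_of_mul_lt_mul_right key (hd i₀).le
      linarith
    · intro i
      constructor
      · intro hij
        constructor
        · have := (hpair i j hij).2
          linarith
        · have := (hfle i j).mp (hjmax i)
          linarith
      · intro hji
        constructor
        · have := (hpair j i hji).1
          linarith
        · have := (hflt i j).mp (hgt i hji)
          linarith

end Fwd
section Card
variable {n : ℕ} (a d : Fin n → ℤ)

lemma vj_of_mem_Tj {j : Fin n} {w : ℤ} {v : Fin n → ℤ} (hv : v ∈ Tj a d j w) :
    v j = w := by
  rw [Tj, Fintype.mem_piFinset] at hv
  have := hv j
  simpa using this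

lemma card_Tj (j : Fin n) (w : ℤ) :
    (Tj a d j w).card = ∏ i ∈ Finset.univ.erase j, (a i).toNat := by
  rw [Tj, Fintype.card_piFinset]
  rw [← Finset.mul_prod_erase Finset.univ _ (Finset.mem_univ j), if_pos rfl,
    Finset.card_singleton, one_mul]
  refine Finset.prod_congr rfl fun i hi => ?_
  rw [if_neg (Finset.ne_of_mem_erase hi), Int.card_Ioc]
  congr 1
  ring

lemma card_Sj (j : Fin n) :
    (Sj a d j).card = (d j).toNat * ∏ i ∈ Finset.univ.erase j, (a i).toNat := by
  rw [Sj, Finset.card_biUnion]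
  · rw [Finset.sum_congr rfl (fun w _ => card_Tj a d j w), Finset.sum_const, Int.card_Ioc,
      smul_eq_mul]
    congr 2
    ring
  · intro w hw w' hw' hne
    rw [Function.onFun, Finset.disjoint_left]
    intro v hv hv'
    exact hne ((vj_of_mem_Tj a d hv).symm.trans (vj_of_mem_Tj a d hv'))

lemma card_boxLow : (boxLow a d).card = ∏ i, (a i).toNat := by
  rw [boxLow, Fintype.card_piFinset]
  refine Finset.prod_congr rfl fun i _ => ?_
  rw [Int.card_Ioc]
  congr 1
  ring

lemma card_FF (ha : ∀ i, 0 < a i) (hd : ∀ i, 0 < d i) :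
    (FF a d).card = ∏ i, (a i).toNat +
      ∑ j, (d j).toNat * ∏ i ∈ Finset.univ.erase j, (a i).toNat := by
  rw [FF, Finset.card_union_of_disjoint, card_boxLow, Finset.card_biUnion]
  · congr 1
    exact Finset.sum_congr rfl fun j _ => card_Sj a d j
  · -- Sj pairwise disjoint
    intro j hj k hk hjk
    rw [Function.onFun, Finset.disjoint_left]
    intro v hvj hvk
    rw [mem_Sj_iff a d (hd j)] at hvj
    rw [mem_Sj_iff a d (hd k)] at hvk
    rcases lt_or_gt_of_ne hjk with h | h
    · have h1 : (v k - a k) * d j < d k * (v j - a j) := ((hvj.2 k).2 h).2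
      have h2 : (v j - a j) * d k ≤ d j * (v k - a k) := ((hvk.2 j).1 h).2
      nlinarith
    · have h1 : (v j - a j) * d k < d j * (v k - a k) := ((hvk.2 j).2 h).2
      have h2 : (v k - a k) * d j ≤ d k * (v j - a j) := ((hvj.2 k).1 h).2
      nlinarith
  · -- boxLow disjoint from union of Sj
    rw [Finset.disjoint_left]
    intro v hv hv'
    rw [Finset.mem_biUnion] at hv'
    obtain ⟨j, -, hvj⟩ := hv'
    rw [mem_Sj_iff a d (hd j)] at hvj
    rw [boxLow, Fintype.mem_piFinset] at hv
    have := Finset.mem_Ioc.mp (hv j)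
    linarith [hvj.1.1]

end Card

theorem stmt0 (n : ℕ) (hn : 2 ≤ n) (a d : Fin n → ℤ)
    (ha : ∀ i, 0 < a i) (hd : ∀ i, 0 < d i) :
    ((setB n a d).ncard : ℤ) =
      ∏ i, a i + ∑ j, d j * ∏ i ∈ Finset.univ.erase j, a i := by
  have hBF : setB n a d = ↑(FF a d) := by
    apply Set.Subset.antisymm
    · intro v hv
      exact setB_subset a d ha hd hv
    · intro v hv
      rw [Finset.mem_coe, FF, Finset.mem_union] at hv
      rcases hv with hv | hv
      · exact boxLow_subset a d ha hd hv
      · rw [Finset.mem_biUnion] at hv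
        obtain ⟨j, -, hv⟩ := hv
        exact Sj_subset a d ha hd hv
  rw [hBF, Set.ncard_coe_finset, card_FF a d ha hd]
  have h1 : ∀ i : Fin n, (((a i).toNat : ℤ)) = a i := fun i => Int.toNat_of_nonneg (ha i).le
  have h2 : ∀ i : Fin n, (((d i).toNat : ℤ)) = d i := fun i => Int.toNat_of_nonneg (hd i).le
  push_cast
  simp only [h1, h2]
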